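/- Let M be a loopless matroid of odd rank r on a finite ground set. Then M is non-degenerate (i.e., deg P_M(t) = ⌊(r−1)/2⌋) if and only if the inverse Kazhdan–Lusztig polynomial Q_M(t) has degree ⌊(r−1)/2⌋. -/

import Mathlib

/-! Self-contained definitions: matroid minors, rank, flats, the Möbius function of the
lattice of flats, the characteristic polynomial, the defining axioms of the
(inverse) Kazhdan–Lusztig polynomials of a matroid, and basic structural notions
(circuits, connectivity, simplicity, representability, modularity). -/

open Polynomial Matroid

namespace KL

variable {α : Type} [Fintype α]

/-- The deletion of a set `D` from the matroid `M`. -/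
def del (M : Matroid α) (D : Set α) : Matroid α := M ↾ (M.E \ D)

/-- The contraction of the matroid `M` by the set `C`, defined by duality. -/
def con (M : Matroid α) (C : Set α) : Matroid α := (del M✶ C)✶

/-- The rank of a matroid on a finite ground set: the maximal size of an independent set. -/
noncomputable def rk (M : Matroid α) : ℕ := sSup {n | ∃ I, M.Indep I ∧ I.ncard = n}

/-- The rank of a set `X` in a matroid `M`. -/
noncomputable def rkSet (M : Matroid α) (X : Set α) : ℕ := rk (M ↾ X)

/-- A matroid is loopless if every singleton of its ground set is independent. -/
def Loopless (M : Matroid α) : Prop := ∀ e ∈ M.E, M.Indep {e}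

/-- A circuit of a matroid is a minimal dependent set. -/
def Circuit (M : Matroid α) (C : Set α) : Prop :=
  M.Dep C ∧ ∀ D, M.Dep D → D ⊆ C → D = C

/-- A matroid is connected if its ground set is nonempty and every two distinct
elements of the ground set lie in a common circuit. -/
def Connected (M : Matroid α) : Prop :=
  M.E.Nonempty ∧ ∀ e f, e ∈ M.E → f ∈ M.E → e ≠ f → ∃ C, Circuit M C ∧ e ∈ C ∧ f ∈ C

/-- A matroid is simple if it has no loops and no pair of parallel elements; equivalently,
every subset of the ground set with at most two elements is independent. -/
def Simple (M : Matroid α) : Prop :=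
  ∀ I : Set α, I ⊆ M.E → I.ncard ≤ 2 → M.Indep I

/-- A matroid is representable over a field `𝔽` if there is an assignment of vectors to the
elements of the ground set such that independence coincides with linear independence. -/
def Representable (M : Matroid α) (𝔽 : Type) [Field 𝔽] : Prop :=
  ∃ (n : ℕ) (φ : α → (Fin n → 𝔽)), ∀ I : Set α,
    M.Indep I ↔ (I ⊆ M.E ∧ LinearIndependent 𝔽 (fun x : I => φ x))

/-- A matroid is regular if it is representable over every field. -/
def Regular (M : Matroid α) : Prop := ∀ (𝔽 : Type) (_ : Field 𝔽), Representable M 𝔽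

/-- The lattice of flats of `M` is modular: `rk F + rk G = rk (F ∨ G) + rk (F ∧ G)` for all
flats `F, G`, where the join of two flats is the closure of their union and their meet is
their intersection. -/
def ModularFlats (M : Matroid α) : Prop :=
  ∀ F G : Set α, M.IsFlat F → M.IsFlat G →
    rkSet M F + rkSet M G = rkSet M (M.closure (F ∪ G)) + rkSet M (F ∩ G)

open Classical in
/-- The finset of flats of a matroid on a finite ground set. -/
noncomputable def flats (M : Matroid α) : Finset (Set α) :=
  Finset.univ.filter fun F => M.IsFlat F

open Classical in
/-- The Möbius function of the lattice of flats of `M`, as a function on pairs of sets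
(zero when either set is not a flat, and zero on non-ordered pairs of flats). -/
noncomputable def mob (M : Matroid α) (F G : Set α) : ℤ :=
  letI : LocallyFiniteOrder {X : Set α // M.IsFlat X} := Fintype.toLocallyFiniteOrder
  if hF : M.IsFlat F then
    if hG : M.IsFlat G then
      IncidenceAlgebra.mu ℤ (⟨F, hF⟩ : {X : Set α // M.IsFlat X}) ⟨G, hG⟩
    else 0
  else 0

open Classical in
/-- The doubly-indexed Whitney numbers of the first kind:
`w_{i,j} = Σ μ(F,G)` over pairs of flats `F ⊆ G` with `rk F = i` and `rk G = j`. -/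
noncomputable def whitney (M : Matroid α) (i j : ℕ) : ℤ :=
  ∑ F ∈ flats M, ∑ G ∈ flats M,
    if rkSet M F = i ∧ rkSet M G = j ∧ F ⊆ G then mob M F G else 0

/-- The characteristic polynomial `χ_M(t) = Σ_{F ∈ L(M)} μ(∅,F) t^(r - rk F)`
of a (loopless) matroid. -/
noncomputable def chi (M : Matroid α) : Polynomial ℤ :=
  ∑ F ∈ flats M, C (mob M ∅ F) * X ^ (rk M - rkSet M F)

/-- The defining axioms of the Kazhdan–Lusztig polynomial assignment `M ↦ P_M(t)`:
`P_M = 1` in rank `0`; `deg P_M < r/2` for `r > 0`; and the defining recursion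
`t^r P_M(t⁻¹) = Σ_{F ∈ L(M)} χ_{M_F}(t) P_{M^F}(t)`, where `t^r P_M(t⁻¹)` is
formalized as `reflect r P_M`. -/
def IsKLPolynomial (P : Matroid α → Polynomial ℤ) : Prop :=
  (∀ N : Matroid α, Loopless N → rk N = 0 → P N = 1) ∧
  (∀ N : Matroid α, Loopless N → 0 < rk N → 2 * (P N).natDegree < rk N) ∧
  (∀ N : Matroid α, Loopless N →
    (P N).reflect (rk N) = ∑ F ∈ flats N, chi (N ↾ F) * P (con N F))

/-- The defining axioms of the inverse Kazhdan–Lusztig polynomial assignment `M ↦ Q_M(t)`: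
`Q_M = 1` in rank `0`; `deg Q_M < r/2` for `r > 0`; and the defining recursion
`(-1)^r t^r Q_M(t⁻¹) = Σ_{F ∈ L(M)} (-1)^(rk F) Q_{M_F}(t) · t^(r - rk F) χ_{M^F}(t⁻¹)`,
where `t^k p(t⁻¹)` is formalized as `reflect k p`. -/
def IsInvKLPolynomial (Q : Matroid α → Polynomial ℤ) : Prop :=
  (∀ N : Matroid α, Loopless N → rk N = 0 → Q N = 1) ∧
  (∀ N : Matroid α, Loopless N → 0 < rk N → 2 * (Q N).natDegree < rk N) ∧
  (∀ N : Matroid α, Loopless N →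
    (-1 : Polynomial ℤ) ^ (rk N) * (Q N).reflect (rk N) =
      ∑ F ∈ flats N, (-1 : Polynomial ℤ) ^ (rkSet N F) * Q (N ↾ F) *
        (chi (con N F)).reflect (rk N - rkSet N F))

set_option linter.unusedSectionVars false


/-! ### Polynomial helpers -/

lemma reflect_reflect {R : Type*} [Semiring R] (p : R[X]) (N : ℕ) :
    (p.reflect N).reflect N = p := by
  ext i
  rw [coeff_reflect, coeff_reflect, revAt_invol]

lemma reflect_sum {R : Type*} [Semiring R] {ι : Type*} (s : Finset ι) (f : ι → R[X]) (N : ℕ) :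
    (∑ i ∈ s, f i).reflect N = ∑ i ∈ s, (f i).reflect N := by
  classical
  induction s using Finset.induction with
  | empty => simp [Polynomial.reflect_zero]
  | insert a s h ih => rw [Finset.sum_insert h, Finset.sum_insert h, Polynomial.reflect_add, ih]

lemma natDegree_reflect_le {R : Type*} [Semiring R] {p : R[X]} {N : ℕ}
    (h : p.natDegree ≤ N) : (p.reflect N).natDegree ≤ N := by
  refine natDegree_le_iff_coeff_eq_zero.2 fun i hi => ?_
  rw [coeff_reflect]
  have : revAt N i = i := revAt_eq_self_of_lt hi
  rw [this]
  exact coeff_eq_zero_of_natDegree_lt (lt_of_le_of_lt h hi)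

/-! ### Möbius transport -/

open IncidenceAlgebra in
lemma mu_transport {X Y : Type*} [PartialOrder X] [PartialOrder Y]
    [LocallyFiniteOrder X] [LocallyFiniteOrder Y] [DecidableEq X] [DecidableEq Y]
    (f : X → Y) (hemb : ∀ u v : X, u ≤ v ↔ f u ≤ f v) :
    ∀ (n : ℕ) (a b : X), (Finset.Icc a b).card ≤ n → a ≤ b →
    (∀ y : Y, f a ≤ y → y ≤ f b → ∃ u, f u = y) →
    mu ℤ a b = mu ℤ (f a) (f b) := by
  have hinj : Function.Injective f := fun u v huv => le_antisymm
    ((hemb u v).2 huv.le) ((hemb v u).2 huv.ge)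
  intro n
  induction n with
  | zero => intro a b hcard hab _; exact absurd (Finset.card_pos.2 ⟨a, Finset.mem_Icc.2 ⟨le_refl a, hab⟩⟩) (by omega)
  | succ n ih =>
    intro a b hcard hab hsurj
    by_cases hab' : a = b
    · subst hab'; simp
    have hfab : f a ≠ f b := fun h => hab' (hinj h)
    rw [mu_apply, mu_apply, if_neg hab', if_neg hfab]
    have himage : Finset.Ico (f a) (f b) = (Finset.Ico a b).image f := by
      ext y
      simp only [Finset.mem_Ico, Finset.mem_image]
      constructor
      · rintro ⟨h1, h2⟩
        obtain ⟨u, rfl⟩ := hsurj y h1 h2.le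
        exact ⟨u, ⟨(hemb a u).2 h1, lt_of_le_of_ne ((hemb u b).2 h2.le)
          (fun h => absurd (congrArg f h) h2.ne)⟩, rfl⟩
      · rintro ⟨u, ⟨h1, h2⟩, rfl⟩
        exact ⟨(hemb a u).1 h1, lt_of_le_of_ne ((hemb u b).1 h2.le)
          (fun h => h2.ne (hinj h))⟩
    rw [himage, Finset.sum_image (fun u _ v _ h => hinj h)]
    congr 1
    refine Finset.sum_congr rfl fun x hx => ?_
    rw [Finset.mem_Ico] at hx
    refine ih a x ?_ hx.1 (fun y hy1 hy2 => hsurj y hy1 (hy2.trans ((hemb x b).1 hx.2.le)))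
    have hsub : Finset.Icc a x ⊆ Finset.Icc a b := Finset.Icc_subset_Icc le_rfl hx.2.le
    have hb : b ∉ Finset.Icc a x := by
      simp only [Finset.mem_Icc, not_and]
      intro _
      exact fun h => absurd (le_antisymm h hx.2.le) (fun he => hx.2.ne he.symm)
    have := Finset.card_lt_card (Finset.ssubset_iff_of_subset hsub |>.2
      ⟨b, Finset.mem_Icc.2 ⟨hab, le_rfl⟩, hb⟩)
    omega


/-! ### Basic matroid infrastructure -/

variable {M : Matroid α} {B C F G I J X : Set α}

lemma rk_eq_ncard_base (hB : M.IsBase B) : rk M = B.ncard := by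
  have hgreat : IsGreatest {n | ∃ I, M.Indep I ∧ I.ncard = n} B.ncard := by
    constructor
    · exact ⟨B, hB.indep, rfl⟩
    · rintro n ⟨I, hI, rfl⟩
      obtain ⟨B', hB', hIB'⟩ := hI.exists_isBase_superset
      calc I.ncard ≤ B'.ncard := Set.ncard_le_ncard hIB' B'.toFinite
        _ = B.ncard := by simp [Set.ncard, hB'.encard_eq_encard_of_isBase hB]
  exact hgreat.csSup_eq

lemma rk_eq_zero_of_ground_eq_empty (h : M.E = ∅) : rk M = 0 := by
  obtain ⟨B, hB⟩ := M.exists_isBase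
  have : B = ∅ := by
    have := hB.subset_ground
    rw [h] at this; exact Set.subset_empty_iff.1 this
  rw [rk_eq_ncard_base hB, this, Set.ncard_empty]

lemma rk_pos_of_indep_singleton {e : α} (he : M.Indep {e}) : 0 < rk M := by
  obtain ⟨B, hB, heB⟩ := he.exists_isBase_superset
  rw [rk_eq_ncard_base hB]
  exact Set.ncard_pos B.toFinite |>.2 ⟨e, heB rfl⟩

lemma rkSet_eq_ncard_basis (hI : M.IsBasis I X) : rkSet M X = I.ncard :=
  rk_eq_ncard_base hI.isBase_restrict

lemma rkSet_empty (M : Matroid α) : rkSet M ∅ = 0 :=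
  rk_eq_zero_of_ground_eq_empty rfl

lemma rkSet_ground (M : Matroid α) : rkSet M M.E = rk M := by
  rw [rkSet, restrict_ground_eq_self]

lemma rkSet_restrict (hGF : G ⊆ F) : rkSet (M ↾ F) G = rkSet M G := by
  rw [rkSet, rkSet, restrict_restrict_eq M hGF]

lemma loopless_restrict (h : Loopless M) (hF : F ⊆ M.E) : Loopless (M ↾ F) := by
  intro e he
  exact ⟨h e (hF he), by simpa using he⟩

/-! ### Contraction -/

@[simp] lemma con_ground (M : Matroid α) (C : Set α) : (con M C).E = M.E \ C := rfl

lemma del_del (M : Matroid α) (A B : Set α) : del (del M A) B = del M (A ∪ B) := by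
  rw [del, del, del, restrict_ground_eq, restrict_restrict_eq _ Set.diff_subset, Set.diff_diff]

lemma con_dual (M : Matroid α) (C : Set α) : (con M C)✶ = del M✶ C := by
  rw [con, dual_dual]

lemma con_con (M : Matroid α) (A B : Set α) : con (con M A) B = con M (A ∪ B) := by
  rw [con, con_dual, del_del, ← con]

lemma con_empty (M : Matroid α) : con M ∅ = M := by
  rw [con, del, Set.diff_empty, restrict_ground_eq_self, dual_dual]

lemma basis_exchange_indep_union {I₁ : Set α} (hI : M.IsBasis I C) (hI₁ : M.IsBasis I₁ C)
    (hJ : M.Indep (J ∪ I₁)) (hJC : Disjoint J C) : M.Indep (J ∪ I) := by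
  have hbasisJC : M.IsBasis (J ∪ I₁) (J ∪ C) := by
    rw [isBasis_iff_indep_closure]
    refine ⟨hJ, Set.union_subset ?_ ?_, Set.union_subset_union_right _ hI₁.subset⟩
    · exact Set.subset_union_left.trans (M.subset_closure _ hJ.subset_ground)
    · exact hI₁.subset_closure.trans (M.closure_subset_closure Set.subset_union_right)
  obtain ⟨K, hK, hIK⟩ := hI.indep.subset_isBasis_of_subset (hI.subset.trans (Set.subset_union_right : C ⊆ J ∪ C))
    (Set.union_subset (Set.subset_union_left.trans hJ.subset_ground) hI.subset_ground)
  have hKC : K ∩ C = I :=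
    (hI.eq_of_subset_indep (hK.indep.subset Set.inter_subset_left)
      (Set.subset_inter hIK hI.subset) Set.inter_subset_right).symm
  have hKdiff : K \ C ⊆ J := by
    intro x hx
    rcases hK.subset hx.1 with h | h
    · exact h
    · exact absurd h hx.2
  have hJI₁ : Disjoint J I₁ := hJC.mono_right hI₁.subset
  have hcard : (K \ C).encard = J.encard := by
    have h1 : K.encard = (J ∪ I₁).encard := hK.encard_eq_encard hbasisJC
    have h2 : (J ∪ I₁).encard = J.encard + I₁.encard := Set.encard_union_eq hJI₁
    have h3 : (K \ C).encard + (K ∩ C).encard = K.encard := Set.encard_diff_add_encard_inter K C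
    have h4 : I₁.encard = I.encard := hI₁.encard_eq_encard hI
    have h5 : (K ∩ C).encard = I.encard := by rw [hKC]
    have hfin : I.encard ≠ ⊤ := I.toFinite.encard_lt_top.ne
    rw [hKC] at h3
    rw [h1, h2, h4] at h3
    exact WithTop.add_right_cancel hfin h3
  have hKJ : K \ C = J := (K \ C).toFinite.eq_of_subset_of_encard_le hKdiff hcard.ge
  have : J ∪ I = K := by rw [← hKJ, ← hKC, Set.diff_union_inter]
  rw [this]
  exact hK.indep

lemma con_indep_iff_of_basis (hC : C ⊆ M.E) (hI : M.IsBasis I C) :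
    (con M C).Indep J ↔ J ⊆ M.E \ C ∧ M.Indep (J ∪ I) := by
  have hdual : (con M C).Indep J ↔
      J ⊆ M.E \ C ∧ ∃ B', M✶.IsBasis B' (M.E \ C) ∧ Disjoint J B' := by
    rw [con, del, dual_indep_iff_exists']
    simp only [restrict_ground_eq, dual_ground]
    refine and_congr_right fun hJE => exists_congr fun B' => and_congr_left fun _ => ?_
    exact isBase_restrict_iff Set.diff_subset
  rw [hdual]
  refine and_congr_right fun hJE => ?_
  have hJC : Disjoint J C := Set.disjoint_of_subset_left hJE Set.disjoint_sdiff_left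
  constructor
  · rintro ⟨B', hB', hdisj⟩
    obtain ⟨B₁, hB₁, hB'eq⟩ := hB'.exists_isBase
    have hbasisdual : M✶.IsBasis (B₁ ∩ (M.E \ C)) (M.E \ C) := by rw [← hB'eq]; exact hB'
    have hBasisC : M.IsBasis ((M.E \ B₁) ∩ C) C := by
      have h := hB₁.compl_inter_isBasis_of_inter_isBasis hbasisdual
      simpa [Set.diff_diff_cancel_left hC] using h
    have hcomplbase : M.IsBase (M.E \ B₁) := hB₁.compl_isBase_of_dual
    have hJB₁ : Disjoint J B₁ := by
      rw [Set.disjoint_iff_inter_eq_empty]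
      have hsub : J ∩ B₁ ⊆ J ∩ B' := fun x hx =>
        ⟨hx.1, hB'eq ▸ ⟨hx.2, hJE hx.1⟩⟩
      have := hdisj.inter_eq
      exact Set.subset_empty_iff.1 (hsub.trans this.subset)
    have hind : M.Indep (J ∪ ((M.E \ B₁) ∩ C)) := by
      refine hcomplbase.indep.subset (Set.union_subset ?_ Set.inter_subset_left)
      exact fun x hx => ⟨(hJE hx).1, Set.disjoint_left.1 hJB₁ hx⟩
    exact basis_exchange_indep_union hI hBasisC hind hJC
  · intro hind
    obtain ⟨B₀, hB₀, hsub⟩ := hind.exists_isBase_superset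
    have hB₀C : M.IsBasis (B₀ ∩ C) C := by
      have : B₀ ∩ C = I :=
        (hI.eq_of_subset_indep (hB₀.indep.subset Set.inter_subset_left)
          (Set.subset_inter (Set.subset_union_right.trans hsub) hI.subset)
          Set.inter_subset_right).symm
      rw [this]; exact hI
    refine ⟨(M.E \ B₀) ∩ (M.E \ C), hB₀.compl_inter_isBasis_of_inter_isBasis hB₀C, ?_⟩
    have hJB₀ : J ⊆ B₀ := Set.subset_union_left.trans hsub
    exact Set.disjoint_of_subset_right Set.inter_subset_left
      (Set.disjoint_of_subset_left hJB₀ Set.disjoint_sdiff_right)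

lemma con_base_iff (hC : C ⊆ M.E) (hI : M.IsBasis I C) {B₀ : Set α} (hB₀ : M.IsBase B₀)
    (hIB₀ : I ⊆ B₀) : (con M C).IsBase (B₀ \ C) := by
  have hB₀C : B₀ ∩ C = I :=
    (hI.eq_of_subset_indep (hB₀.indep.subset Set.inter_subset_left)
      (Set.subset_inter hIB₀ hI.subset) Set.inter_subset_right).symm
  rw [isBase_iff_maximal_indep]
  constructor
  · rw [con_indep_iff_of_basis hC hI]
    refine ⟨Set.diff_subset_diff_left hB₀.subset_ground, ?_⟩
    have : B₀ \ C ∪ I = B₀ := by rw [← hB₀C, Set.diff_union_inter]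
    rw [this]; exact hB₀.indep
  · intro J hJ hsub
    rw [con_indep_iff_of_basis hC hI] at hJ
    obtain ⟨hJE, hJI⟩ := hJ
    have hBsub : B₀ ⊆ J ∪ I := by
      rw [← Set.diff_union_inter B₀ C, hB₀C]
      exact Set.union_subset_union_left _ hsub
    have hBeq : B₀ = J ∪ I := hB₀.eq_of_subset_indep hJI hBsub
    intro x hx
    have : x ∈ B₀ := hBeq ▸ Set.mem_union_left _ hx
    exact ⟨this, (hJE hx).2⟩

lemma rkSet_add_rk_con (hC : C ⊆ M.E) : rkSet M C + rk (con M C) = rk M := by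
  obtain ⟨I, hI⟩ := M.exists_isBasis C hC
  obtain ⟨B₀, hB₀, hIB₀⟩ := hI.indep.exists_isBase_superset
  have hB₀C : B₀ ∩ C = I :=
    (hI.eq_of_subset_indep (hB₀.indep.subset Set.inter_subset_left)
      (Set.subset_inter hIB₀ hI.subset) Set.inter_subset_right).symm
  rw [rkSet_eq_ncard_basis hI, rk_eq_ncard_base (con_base_iff hC hI hB₀ hIB₀),
    rk_eq_ncard_base hB₀, ← hB₀C]
  have := Set.ncard_inter_add_ncard_diff_eq_ncard B₀ C B₀.toFinite
  omega

lemma con_loopless (hM : Loopless M) (hF : M.IsFlat F) : Loopless (con M F) := by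
  obtain ⟨I, hI⟩ := M.exists_isBasis F hF.subset_ground
  intro e he
  rw [con_ground] at he
  rw [con_indep_iff_of_basis hF.subset_ground hI]
  refine ⟨Set.singleton_subset_iff.2 he, ?_⟩
  rw [Set.singleton_union]
  by_contra hdep
  have heI : e ∉ I := fun h => he.2 (hI.subset h)
  have hIind := hI.indep
  have : e ∈ M.closure I := by
    rw [hIind.mem_closure_iff' ]
    exact ⟨he.1, fun h => absurd h hdep⟩
  rw [hI.closure_eq_closure, hF.closure] at this
  exact he.2 this

/-! ### Closure and flats of restrictions and contractions -/

lemma restrict_closure (hR : F ⊆ M.E) (hX : X ⊆ F) :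
    (M ↾ F).closure X = M.closure X ∩ F := by
  obtain ⟨J, hJ⟩ := M.exists_isBasis X (hX.trans hR)
  have hJr : (M ↾ F).IsBasis J X := (isBasis_restrict_iff hR).2 ⟨hJ, hX⟩
  ext e
  rw [← hJr.closure_eq_closure, ← hJ.closure_eq_closure, Set.mem_inter_iff,
    hJr.indep.mem_closure_iff', hJ.indep.mem_closure_iff', restrict_ground_eq,
    restrict_indep_iff]
  constructor
  · rintro ⟨heF, himp⟩
    exact ⟨⟨hR heF, fun hind => himp ⟨hind, Set.insert_subset heF (hJ.subset.trans hX)⟩⟩, heF⟩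
  · rintro ⟨⟨heE, himp⟩, heF⟩
    exact ⟨heF, fun hind => himp hind.1⟩

lemma con_closure (hC : C ⊆ M.E) (hX : X ⊆ M.E \ C) :
    (con M C).closure X = M.closure (X ∪ C) \ C := by
  obtain ⟨I, hI⟩ := M.exists_isBasis C hC
  obtain ⟨J, hJ⟩ := (con M C).exists_isBasis X (by rw [con_ground]; exact hX)
  have hJind := hJ.indep
  rw [con_indep_iff_of_basis hC hI] at hJind
  obtain ⟨hJE, hJIind⟩ := hJind
  have hJX : J ⊆ X := hJ.subset
  have hbasis : M.IsBasis (J ∪ I) (X ∪ C) := by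
    rw [isBasis_iff_indep_closure]
    refine ⟨hJIind, Set.union_subset ?_
      (hI.subset_closure.trans (M.closure_subset_closure Set.subset_union_right)),
      Set.union_subset_union hJX hI.subset⟩
    intro x hx
    by_cases hxJ : x ∈ J
    · exact M.subset_closure _ hJIind.subset_ground (Set.mem_union_left _ hxJ)
    · have hnind : ¬ (con M C).Indep (insert x J) := by
        intro hind
        exact hxJ (hJ.mem_of_insert_indep hx hind)
      rw [con_indep_iff_of_basis hC hI] at hnind
      push_neg at hnind
      have hins : insert x J ⊆ M.E \ C := Set.insert_subset (hX hx) hJE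
      have := hnind hins
      rw [Set.insert_union] at this
      rw [hJIind.mem_closure_iff']
      exact ⟨(hX hx).1, fun h => absurd h this⟩
  ext e
  rw [← hJ.closure_eq_closure, ← hbasis.closure_eq_closure,
    hJ.indep.mem_closure_iff', Set.mem_diff, hJIind.mem_closure_iff', con_ground, Set.mem_diff]
  rw [con_indep_iff_of_basis hC hI]
  constructor
  · rintro ⟨⟨heE, heC⟩, himp⟩
    refine ⟨⟨heE, fun hind => ?_⟩, heC⟩
    have : insert e J ⊆ M.E \ C := Set.insert_subset ⟨heE, heC⟩ hJE
    rw [← Set.insert_union] at hind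
    rcases himp ⟨this, hind⟩ with h
    exact Set.mem_union_left _ h
  · rintro ⟨⟨heE, himp⟩, heC⟩
    refine ⟨⟨heE, heC⟩, fun hind => ?_⟩
    obtain ⟨hsub, hund⟩ := hind
    rw [Set.insert_union] at hund
    rcases himp hund with h | h
    · exact h
    · exact absurd (hI.subset h) heC

lemma flat_iff_closure_eq : M.IsFlat F ↔ M.closure F = F ∧ F ⊆ M.E := by
  constructor
  · exact fun h => ⟨h.closure, h.subset_ground⟩
  · rintro ⟨hcl, hFE⟩
    refine ⟨fun I X hIF hIX => ?_, hFE⟩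
    have := hIX.subset_closure
    rwa [hIF.closure_eq_closure, hcl] at this

lemma restrict_flat_iff (hF : M.IsFlat F) :
    (M ↾ F).IsFlat G ↔ M.IsFlat G ∧ G ⊆ F := by
  constructor
  · intro h
    have hGF : G ⊆ F := h.subset_ground
    have hcl := h.closure
    rw [restrict_closure hF.subset_ground hGF] at hcl
    have hclG : M.closure G ⊆ F := (M.closure_subset_closure hGF).trans_eq hF.closure
    rw [Set.inter_eq_self_of_subset_left hclG] at hcl
    exact ⟨flat_iff_closure_eq.2 ⟨hcl, hGF.trans hF.subset_ground⟩, hGF⟩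
  · rintro ⟨hG, hGF⟩
    rw [flat_iff_closure_eq, restrict_ground_eq]
    rw [restrict_closure hF.subset_ground hGF, hG.closure]
    exact ⟨Set.inter_eq_self_of_subset_left hGF, hGF⟩

lemma con_flat_iff (hC : M.IsFlat C) {K : Set α} :
    (con M C).IsFlat K ↔ M.IsFlat (K ∪ C) ∧ K ⊆ M.E \ C := by
  have hCE := hC.subset_ground
  constructor
  · intro h
    have hKE : K ⊆ M.E \ C := h.subset_ground
    have hcl := h.closure
    rw [con_closure hCE hKE] at hcl
    refine ⟨flat_iff_closure_eq.2 ⟨?_, Set.union_subset (hKE.trans Set.diff_subset) hCE⟩, hKE⟩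
    apply Set.Subset.antisymm _ (M.subset_closure _ (Set.union_subset (hKE.trans Set.diff_subset) hCE))
    intro x hx
    by_cases hxC : x ∈ C
    · exact Set.mem_union_right _ hxC
    · exact Set.mem_union_left _ (hcl ▸ ⟨hx, hxC⟩)
  · rintro ⟨hflat, hKE⟩
    rw [flat_iff_closure_eq, con_ground]
    rw [con_closure hCE hKE, hflat.closure]
    refine ⟨?_, hKE⟩
    rw [Set.union_diff_right]
    exact sdiff_eq_left.mpr (Set.disjoint_of_subset_left hKE Set.disjoint_sdiff_left)

lemma empty_flat (hM : Loopless M) : M.IsFlat ∅ := by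
  rw [flat_iff_closure_eq]
  refine ⟨?_, Set.empty_subset _⟩
  ext e
  simp only [Set.mem_empty_iff_false, iff_false]
  intro he
  have heE : e ∈ M.E := mem_ground_of_mem_closure he
  have := (M.empty_indep.mem_closure_iff').1 he
  exact this.2 (by simpa using hM e heE)

lemma con_restrict (hGF : G ⊆ F) (hF : F ⊆ M.E) :
    (con M G) ↾ (F \ G) = con (M ↾ F) G := by
  obtain ⟨I, hI⟩ := M.exists_isBasis G (hGF.trans hF)
  have hIr : (M ↾ F).IsBasis I G := (isBasis_restrict_iff hF).2 ⟨hI, hGF⟩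
  refine ext_indep ?_ fun ⦃J⦄ hJ => ?_
  · rw [restrict_ground_eq, con_ground, restrict_ground_eq]
  · rw [restrict_ground_eq] at hJ
    rw [restrict_indep_iff, con_indep_iff_of_basis (hGF.trans hF) hI,
      con_indep_iff_of_basis (show G ⊆ (M ↾ F).E from hGF) hIr, restrict_ground_eq,
      restrict_indep_iff]
    have hJF : J ⊆ M.E \ G := hJ.trans (Set.diff_subset_diff_left hF)
    have hJIF : J ∪ I ⊆ F := Set.union_subset (hJ.trans Set.diff_subset) (hI.subset.trans hGF)
    constructor
    · rintro ⟨⟨_, hind⟩, _⟩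
      exact ⟨hJ, hind, hJIF⟩
    · rintro ⟨_, hind, _⟩
      exact ⟨⟨hJF, hind⟩, hJ⟩

lemma con_ground_self (M : Matroid α) : (con M M.E).E = ∅ := by
  rw [con_ground, Set.diff_self]

lemma loopless_of_ground_empty (h : M.E = ∅) : Loopless M := by
  intro e he; rw [h] at he; exact absurd he (Set.notMem_empty e)

/-! ### The flats finset -/

open Classical in
lemma mem_flats : F ∈ flats M ↔ M.IsFlat F := by
  simp [flats]

open Classical in
lemma flats_restrict (hF : M.IsFlat F) :
    flats (M ↾ F) = (flats M).filter (fun G => G ⊆ F) := by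
  ext G
  simp only [mem_flats, Finset.mem_filter, restrict_flat_iff hF, mem_flats]

open Classical in
lemma flats_con (hC : M.IsFlat C) :
    flats (con M C) = ((flats M).filter (fun H => C ⊆ H)).image (fun H => H \ C) := by
  ext K
  simp only [mem_flats, Finset.mem_image, Finset.mem_filter, con_flat_iff hC]
  constructor
  · rintro ⟨hflat, hKE⟩
    refine ⟨K ∪ C, ⟨hflat, Set.subset_union_right⟩, ?_⟩
    rw [Set.union_diff_right]
    exact sdiff_eq_left.mpr (Set.disjoint_of_subset_left hKE Set.disjoint_sdiff_left)
  · rintro ⟨H, ⟨hflat, hCH⟩, rfl⟩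
    rw [Set.diff_union_of_subset hCH]
    exact ⟨hflat, Set.diff_subset_diff_left hflat.subset_ground⟩

/-! ### Möbius transport for minors -/

lemma mob_restrict_eq {G' : Set α} (hF : M.IsFlat F) (hG : M.IsFlat G) (hG' : M.IsFlat G')
    (hGG' : G ⊆ G') (hG'F : G' ⊆ F) :
    mob (M ↾ F) G G' = mob M G G' := by
  classical
  have hGr : (M ↾ F).IsFlat G := (restrict_flat_iff hF).2 ⟨hG, hGG'.trans hG'F⟩
  have hG'r : (M ↾ F).IsFlat G' := (restrict_flat_iff hF).2 ⟨hG', hG'F⟩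
  rw [mob, mob, dif_pos hGr, dif_pos hG'r, dif_pos hG, dif_pos hG']
  letI : LocallyFiniteOrder {X : Set α // (M ↾ F).IsFlat X} := Fintype.toLocallyFiniteOrder
  letI : LocallyFiniteOrder {X : Set α // M.IsFlat X} := Fintype.toLocallyFiniteOrder
  set f : {X : Set α // (M ↾ F).IsFlat X} → {X : Set α // M.IsFlat X} :=
    fun S => ⟨S.1, ((restrict_flat_iff hF).1 S.2).1⟩ with hf
  have hemb : ∀ u v, u ≤ v ↔ f u ≤ f v := fun u v => Iff.rfl
  have := mu_transport f hemb (Finset.Icc (⟨G, hGr⟩ : {X : Set α // (M ↾ F).IsFlat X}) ⟨G', hG'r⟩).card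
    ⟨G, hGr⟩ ⟨G', hG'r⟩ le_rfl hGG' ?_
  · exact this
  · rintro ⟨y, hy⟩ h1 h2
    have h2' : y ⊆ G' := h2
    have hyF : y ⊆ F := h2'.trans hG'F
    exact ⟨⟨y, (restrict_flat_iff hF).2 ⟨hy, hyF⟩⟩, rfl⟩

lemma mob_con_eq {H H' : Set α} (hC : M.IsFlat C) (hH : M.IsFlat H) (hH' : M.IsFlat H')
    (hCH : C ⊆ H) (hHH' : H ⊆ H') :
    mob (con M C) (H \ C) (H' \ C) = mob M H H' := by
  classical
  have hHc : (con M C).IsFlat (H \ C) := (con_flat_iff hC).2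
    ⟨by rwa [Set.diff_union_of_subset hCH], Set.diff_subset_diff_left hH.subset_ground⟩
  have hH'c : (con M C).IsFlat (H' \ C) := (con_flat_iff hC).2
    ⟨by rwa [Set.diff_union_of_subset (hCH.trans hHH')],
      Set.diff_subset_diff_left hH'.subset_ground⟩
  rw [mob, mob, dif_pos hHc, dif_pos hH'c, dif_pos hH, dif_pos hH']
  letI : LocallyFiniteOrder {X : Set α // (con M C).IsFlat X} := Fintype.toLocallyFiniteOrder
  letI : LocallyFiniteOrder {X : Set α // M.IsFlat X} := Fintype.toLocallyFiniteOrder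
  set f : {X : Set α // (con M C).IsFlat X} → {X : Set α // M.IsFlat X} :=
    fun S => ⟨S.1 ∪ C, ((con_flat_iff hC).1 S.2).1⟩ with hf
  have hemb : ∀ u v, u ≤ v ↔ f u ≤ f v := by
    rintro ⟨u, hu⟩ ⟨v, hv⟩
    constructor
    · intro h
      exact Set.union_subset_union_left _ h
    · intro h x hx
      have hxE : x ∈ M.E \ C := ((con_flat_iff hC).1 hu).2 hx
      rcases (h (Set.mem_union_left _ hx) : x ∈ v ∪ C) with h' | h'
      · exact h'
      · exact absurd h' hxE.2
  have hmono : (H \ C : Set α) ⊆ H' \ C := Set.diff_subset_diff_left hHH'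
  have := mu_transport f hemb
    (Finset.Icc (⟨H \ C, hHc⟩ : {X : Set α // (con M C).IsFlat X}) ⟨H' \ C, hH'c⟩).card
    ⟨H \ C, hHc⟩ ⟨H' \ C, hH'c⟩ le_rfl hmono ?_
  · have ha : (f ⟨H \ C, hHc⟩) = (⟨H, hH⟩ : {X : Set α // M.IsFlat X}) :=
      Subtype.ext (Set.diff_union_of_subset hCH)
    have hb : (f ⟨H' \ C, hH'c⟩) = (⟨H', hH'⟩ : {X : Set α // M.IsFlat X}) :=
      Subtype.ext (Set.diff_union_of_subset (hCH.trans hHH'))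
    rw [this, ha, hb]
  · rintro ⟨y, hy⟩ h1 h2
    have h1' : (H \ C) ∪ C ⊆ y := h1
    have hCy : C ⊆ y := (Set.subset_union_right : C ⊆ (H \ C) ∪ C).trans h1'
    refine ⟨⟨y \ C, (con_flat_iff hC).2 ⟨by rwa [Set.diff_union_of_subset hCy],
      Set.diff_subset_diff_left hy.subset_ground⟩⟩, ?_⟩
    exact Subtype.ext (Set.diff_union_of_subset hCy)

/-! ### Degree bounds -/

lemma neg_one_pow_eq_C (k : ℕ) : ((-1 : Polynomial ℤ)) ^ k = Polynomial.C ((-1 : ℤ) ^ k) := by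
  rw [Polynomial.C_pow, Polynomial.C_neg, Polynomial.C_1]

lemma natDegree_chi_le (N : Matroid α) : (chi N).natDegree ≤ rk N := by
  classical
  refine Polynomial.natDegree_sum_le_of_forall_le _ _ fun F _ => ?_
  refine (natDegree_mul_le).trans ?_
  simp [natDegree_C, natDegree_X_pow]

lemma deg_bound_axioms {R : Matroid α → Polynomial ℤ} {N : Matroid α}
    (h0 : ∀ N : Matroid α, Loopless N → rk N = 0 → R N = 1)
    (hdeg : ∀ N : Matroid α, Loopless N → 0 < rk N → 2 * (R N).natDegree < rk N)
    (hN : Loopless N) : 2 * (R N).natDegree ≤ rk N := by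
  rcases Nat.eq_zero_or_pos (rk N) with h | h
  · rw [h0 N hN h, natDegree_one]; omega
  · exact (hdeg N hN h).le

lemma rkSet_pos_of_nonempty (hM : Loopless M) (hF : M.IsFlat F) (hne : F.Nonempty) :
    0 < rkSet M F := by
  obtain ⟨e, he⟩ := hne
  have : (M ↾ F).Indep {e} := by
    rw [restrict_indep_iff]
    exact ⟨hM e (hF.subset_ground he), Set.singleton_subset_iff.2 he⟩
  exact rk_pos_of_indep_singleton this

lemma rk_con_pos (hM : Loopless M) (hF : M.IsFlat F) (hne : F ≠ M.E) :
    0 < rk (con M F) := by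
  have hss : F ⊂ M.E := hF.subset_ground.ssubset_of_ne hne
  obtain ⟨e, he⟩ := Set.nonempty_of_ssubset hss
  have := con_loopless hM hF e (by rw [con_ground]; exact ⟨he.1, he.2⟩)
  exact rk_pos_of_indep_singleton this

/-! ### The two transported recursions -/

open Classical in
lemma stepQ {Q : Matroid α → Polynomial ℤ} (hQ : IsInvKLPolynomial Q)
    (hM : Loopless M) (hF : M.IsFlat F) :
    (-1 : Polynomial ℤ) ^ (rkSet M F) * Q (M ↾ F) =
      ∑ G ∈ (flats M).filter (fun G => G ⊆ F),
        ((-1 : Polynomial ℤ) ^ (rkSet M G) * Q (M ↾ G)).reflect (rkSet M G) *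
          chi (con (M ↾ F) G) := by
  obtain ⟨hQ0, hQdeg, hQrec⟩ := hQ
  have hFE := hF.subset_ground
  have hrkF : rk (M ↾ F) = rkSet M F := rfl
  have hrec := hQrec (M ↾ F) (loopless_restrict hM hFE)
  rw [flats_restrict hF, hrkF] at hrec
  have hadd : ∀ G, M.IsFlat G → G ⊆ F → rkSet M G + rk (con (M ↾ F) G) = rkSet M F := by
    intro G hGflat hGF
    have := rkSet_add_rk_con (M := M ↾ F) (C := G) (by rw [restrict_ground_eq]; exact hGF)
    rwa [rkSet_restrict hGF, hrkF] at this
  have hrec2 : (-1 : Polynomial ℤ) ^ (rkSet M F) * (Q (M ↾ F)).reflect (rkSet M F) =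
      ∑ G ∈ (flats M).filter (fun G => G ⊆ F),
        (-1 : Polynomial ℤ) ^ (rkSet M G) * Q (M ↾ G) *
          (chi (con (M ↾ F) G)).reflect (rk (con (M ↾ F) G)) := by
    rw [hrec]
    refine Finset.sum_congr rfl fun G hG => ?_
    rw [Finset.mem_filter, mem_flats] at hG
    obtain ⟨hGflat, hGF⟩ := hG
    rw [rkSet_restrict hGF, restrict_restrict_eq M hGF]
    congr 2
    have := hadd G hGflat hGF
    omega
  have happ := congrArg (fun p => p.reflect (rkSet M F)) hrec2
  rw [reflect_sum, neg_one_pow_eq_C (rkSet M F), reflect_C_mul, reflect_reflect,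
    ← neg_one_pow_eq_C] at happ
  rw [happ]
  refine Finset.sum_congr rfl fun G hG => ?_
  rw [Finset.mem_filter, mem_flats] at hG
  obtain ⟨hGflat, hGF⟩ := hG
  have h3 := hadd G hGflat hGF
  have hp : ((-1 : Polynomial ℤ) ^ (rkSet M G) * Q (M ↾ G)).natDegree ≤ rkSet M G := by
    rw [neg_one_pow_eq_C]
    refine (natDegree_C_mul_le _ _).trans ?_
    have h := deg_bound_axioms hQ0 hQdeg (loopless_restrict hM (hGF.trans hFE))
    have hrkG : rk (M ↾ G) = rkSet M G := rfl
    rw [hrkG] at h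
    omega
  have hq : ((chi (con (M ↾ F) G)).reflect (rk (con (M ↾ F) G))).natDegree ≤
      rk (con (M ↾ F) G) := natDegree_reflect_le (natDegree_chi_le _)
  rw [← h3, reflect_mul _ _ hp hq, reflect_reflect]

open Classical in
lemma stepP {P : Matroid α → Polynomial ℤ} (hP : IsKLPolynomial P)
    (hM : Loopless M) (hG : M.IsFlat G) :
    (P (con M G)).reflect (rk (con M G)) =
      ∑ F ∈ (flats M).filter (fun F => G ⊆ F), chi (con (M ↾ F) G) * P (con M F) := by
  obtain ⟨hP0, hPdeg, hPrec⟩ := hP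
  have hrec := hPrec (con M G) (con_loopless hM hG)
  rw [flats_con hG] at hrec
  rw [Finset.sum_image ?hinj] at hrec
  case hinj =>
    intro H hH H' hH' hEq
    rw [Finset.mem_coe, Finset.mem_filter] at hH hH'
    have h1 : H \ G ∪ G = H := Set.diff_union_of_subset hH.2
    have h2 : H' \ G ∪ G = H' := Set.diff_union_of_subset hH'.2
    rw [← h1, ← h2, show H \ G = H' \ G from hEq]
  rw [hrec]
  refine Finset.sum_congr rfl fun F hF => ?_
  rw [Finset.mem_filter, mem_flats] at hF
  obtain ⟨hFflat, hGF⟩ := hF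
  rw [con_restrict hGF hFflat.subset_ground, con_con, Set.union_diff_cancel hGF]

/-! ### The convolution identity and its bar-invariance -/

open Classical in
lemma A_bar {P Q : Matroid α → Polynomial ℤ} (hP : IsKLPolynomial P) (hQ : IsInvKLPolynomial Q)
    (hM : Loopless M) :
    ∑ F ∈ flats M, (-1 : Polynomial ℤ) ^ (rkSet M F) * Q (M ↾ F) * P (con M F) =
      (∑ F ∈ flats M, (-1 : Polynomial ℤ) ^ (rkSet M F) * Q (M ↾ F) * P (con M F)).reflect
        (rk M) := by
  have hadd : ∀ G, M.IsFlat G → rkSet M G + rk (con M G) = rk M := fun G hG =>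
    rkSet_add_rk_con hG.subset_ground
  have hQb : ∀ G, M.IsFlat G →
      ((-1 : Polynomial ℤ) ^ (rkSet M G) * Q (M ↾ G)).natDegree ≤ rkSet M G := by
    intro G hG
    rw [neg_one_pow_eq_C]
    refine (natDegree_C_mul_le _ _).trans ?_
    have h := deg_bound_axioms hQ.1 hQ.2.1 (loopless_restrict hM hG.subset_ground)
    have hrkG : rk (M ↾ G) = rkSet M G := rfl
    rw [hrkG] at h; omega
  have hPb : ∀ G, M.IsFlat G → (P (con M G)).natDegree ≤ rk (con M G) := by
    intro G hG
    have h := deg_bound_axioms hP.1 hP.2.1 (con_loopless hM hG)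
    omega
  calc ∑ F ∈ flats M, (-1 : Polynomial ℤ) ^ (rkSet M F) * Q (M ↾ F) * P (con M F)
      = ∑ F ∈ flats M, ∑ G ∈ (flats M).filter (fun G => G ⊆ F),
          ((-1 : Polynomial ℤ) ^ (rkSet M G) * Q (M ↾ G)).reflect (rkSet M G) *
            chi (con (M ↾ F) G) * P (con M F) := by
        refine Finset.sum_congr rfl fun F hF => ?_
        rw [stepQ hQ hM (mem_flats.1 hF), Finset.sum_mul]
    _ = ∑ G ∈ flats M, ∑ F ∈ (flats M).filter (fun F => G ⊆ F),
          ((-1 : Polynomial ℤ) ^ (rkSet M G) * Q (M ↾ G)).reflect (rkSet M G) *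
            (chi (con (M ↾ F) G) * P (con M F)) := by
        simp only [Finset.sum_filter, mul_assoc]
        exact Finset.sum_comm
    _ = ∑ G ∈ flats M,
          ((-1 : Polynomial ℤ) ^ (rkSet M G) * Q (M ↾ G)).reflect (rkSet M G) *
            ((P (con M G)).reflect (rk (con M G))) := by
        refine Finset.sum_congr rfl fun G hG => ?_
        rw [← Finset.mul_sum, ← stepP hP hM (mem_flats.1 hG)]
    _ = ∑ G ∈ flats M,
          ((-1 : Polynomial ℤ) ^ (rkSet M G) * Q (M ↾ G) * P (con M G)).reflect (rk M) := by
        refine Finset.sum_congr rfl fun G hG => ?_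
        have hGflat := mem_flats.1 hG
        rw [← hadd G hGflat, reflect_mul _ _ (hQb G hGflat) (hPb G hGflat)]
    _ = _ := (reflect_sum _ _ _).symm

open Classical in
lemma coeff_P_eq_coeff_Q {P Q : Matroid α → Polynomial ℤ} (hP : IsKLPolynomial P)
    (hQ : IsInvKLPolynomial Q) (hM : Loopless M) {d : ℕ} (hr : rk M = 2 * d + 1) :
    (P M).coeff d = (Q M).coeff d := by
  have hrpos : 0 < rk M := by omega
  set t : Set α → Polynomial ℤ :=
    fun F => (-1 : Polynomial ℤ) ^ (rkSet M F) * Q (M ↾ F) * P (con M F) with ht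
  have hQb : ∀ G, M.IsFlat G → 2 * (Q (M ↾ G)).natDegree ≤ rkSet M G := by
    intro G hG
    have h := deg_bound_axioms hQ.1 hQ.2.1 (loopless_restrict hM hG.subset_ground)
    have hrkG : rk (M ↾ G) = rkSet M G := rfl
    rw [hrkG] at h; omega
  have hPb : ∀ G, M.IsFlat G → 2 * (P (con M G)).natDegree ≤ rk (con M G) := fun G hG =>
    deg_bound_axioms hP.1 hP.2.1 (con_loopless hM hG)
  have hadd : ∀ G, M.IsFlat G → rkSet M G + rk (con M G) = rk M := fun G hG =>
    rkSet_add_rk_con hG.subset_ground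
  have htb : ∀ G, M.IsFlat G →
      (t G).natDegree ≤ (Q (M ↾ G)).natDegree + (P (con M G)).natDegree := by
    intro G hG
    rw [ht]
    refine (natDegree_mul_le).trans (Nat.add_le_add_right ?_ _)
    rw [neg_one_pow_eq_C]
    exact natDegree_C_mul_le _ _
  have hall : ∀ F, M.IsFlat F → 2 * (t F).natDegree < rk M := by
    intro F hF
    have h1 := hQb F hF
    have h2 := hPb F hF
    have h3 := hadd F hF
    have h4 := htb F hF
    rcases Nat.eq_zero_or_pos (rkSet M F) with h0 | h0
    · have hQ1 : Q (M ↾ F) = 1 := hQ.1 _ (loopless_restrict hM hF.subset_ground) h0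
      have hconpos : 0 < rk (con M F) := by omega
      have h5 := hP.2.1 (con M F) (con_loopless hM hF) hconpos
      rw [hQ1, natDegree_one] at h4
      omega
    · have hnonempty : F.Nonempty := by
        by_contra hne
        rw [Set.not_nonempty_iff_eq_empty] at hne
        subst hne
        rw [rkSet_empty] at h0
        omega
      have h5 := hQ.2.1 (M ↾ F) (loopless_restrict hM hF.subset_ground) (by
        have hrkG : rk (M ↾ F) = rkSet M F := rfl
        omega)
      have hrkG : rk (M ↾ F) = rkSet M F := rfl
      rw [hrkG] at h5
      omega
  have hmid : ∀ F, M.IsFlat F → F ≠ ∅ → F ≠ M.E → (t F).natDegree < d := by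
    intro F hF hne hnE
    have h1 : 0 < rkSet M F :=
      rkSet_pos_of_nonempty hM hF (Set.nonempty_iff_ne_empty.2 hne)
    have h2 : 0 < rk (con M F) := rk_con_pos hM hF hnE
    have h3 := hadd F hF
    have h4 := htb F hF
    have h5 := hQ.2.1 (M ↾ F) (loopless_restrict hM hF.subset_ground) (by
      have hrkG : rk (M ↾ F) = rkSet M F := rfl
      omega)
    have hrkG : rk (M ↾ F) = rkSet M F := rfl
    rw [hrkG] at h5
    have h6 := hP.2.1 (con M F) (con_loopless hM hF) h2
    omega
  have hndA : (∑ F ∈ flats M, t F).natDegree ≤ d := by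
    refine natDegree_sum_le_of_forall_le _ _ fun F hF => ?_
    have := hall F (mem_flats.1 hF)
    omega
  have hA_bar : (∑ F ∈ flats M, t F) = (∑ F ∈ flats M, t F).reflect (rk M) := by
    simp only [ht]
    exact A_bar hP hQ hM
  have hAd : (∑ F ∈ flats M, t F).coeff d = 0 := by
    conv_lhs => rw [hA_bar]
    rw [coeff_reflect, revAt_le (by omega : d ≤ rk M)]
    exact coeff_eq_zero_of_natDegree_lt (by omega)
  have hbot : ∅ ∈ flats M := mem_flats.2 (empty_flat hM)
  have hEflat : M.E ∈ flats M := mem_flats.2 (M.ground_isFlat)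
  have hEne : (∅ : Set α) ≠ M.E := by
    obtain ⟨B, hB⟩ := M.exists_isBase
    have hcard := rk_eq_ncard_base hB
    have hBne : B.Nonempty := Set.ncard_pos B.toFinite |>.1 (by omega)
    obtain ⟨e, he⟩ := hBne
    intro hcontra
    have : e ∈ M.E := hB.subset_ground he
    rw [← hcontra] at this
    exact this
  have hsub : ({∅, M.E} : Finset (Set α)) ⊆ flats M := by
    intro x hx
    rcases Finset.mem_insert.1 hx with h | h
    · subst h; exact hbot
    · rw [Finset.mem_singleton] at h; subst h; exact hEflat
  rw [← Finset.sum_sdiff hsub, Finset.sum_pair hEne] at hAd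
  have htbot : t ∅ = P M := by
    have hQ1 : Q (M ↾ (∅ : Set α)) = 1 :=
      hQ.1 _ (loopless_of_ground_empty rfl) (rk_eq_zero_of_ground_eq_empty rfl)
    rw [ht]
    simp only [rkSet_empty, pow_zero, one_mul, hQ1, con_empty]
  have htE : t M.E = (-1 : Polynomial ℤ) ^ (rk M) * Q M := by
    have hP1 : P (con M M.E) = 1 :=
      hP.1 _ (loopless_of_ground_empty (con_ground_self M))
        (rk_eq_zero_of_ground_eq_empty (con_ground_self M))
    rw [ht]
    simp only [rkSet_ground, restrict_ground_eq_self, hP1, mul_one]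
  have hmidzero : ((flats M \ {∅, M.E}).sum t).coeff d = 0 := by
    rw [finset_sum_coeff]
    refine Finset.sum_eq_zero fun F hF => ?_
    rw [Finset.mem_sdiff, Finset.mem_insert, Finset.mem_singleton] at hF
    push_neg at hF
    exact coeff_eq_zero_of_natDegree_lt (hmid F (mem_flats.1 hF.1) (Set.nonempty_iff_ne_empty.1 hF.2.1) hF.2.2)
  rw [coeff_add, hmidzero, zero_add, coeff_add, htbot, htE, neg_one_pow_eq_C,
    coeff_C_mul] at hAd
  have hodd : Odd (rk M) := ⟨d, by omega⟩
  rw [hodd.neg_one_pow] at hAd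
  linarith

/-- Let `M` be a loopless matroid of odd rank `r` on a finite ground set. Then
`M` is non-degenerate (i.e., `deg P_M(t) = ⌊(r-1)/2⌋`) if and only if the inverse
Kazhdan–Lusztig polynomial `Q_M(t)` has degree `⌊(r-1)/2⌋`. -/
theorem nondegenerate_iff_invKL_degree {α : Type} [Fintype α]
    (P Q : Matroid α → Polynomial ℤ) (hP : IsKLPolynomial P) (hQ : IsInvKLPolynomial Q)
    (M : Matroid α) (hM : Loopless M) (hodd : Odd (rk M)) :
    (P M).natDegree = (rk M - 1) / 2 ↔ (Q M).natDegree = (rk M - 1) / 2 := by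
  obtain ⟨d, hd⟩ := hodd
  have hr : rk M = 2 * d + 1 := by omega
  have hd2 : (rk M - 1) / 2 = d := by omega
  rw [hd2]
  have hrpos : 0 < rk M := by omega
  have hPle : (P M).natDegree ≤ d := by
    have := hP.2.1 M hM hrpos
    omega
  have hQle : (Q M).natDegree ≤ d := by
    have := hQ.2.1 M hM hrpos
    omega
  have hc := coeff_P_eq_coeff_Q hP hQ hM hr
  rcases Nat.eq_zero_or_pos d with h0 | h0
  · subst h0
    omega
  constructor
  · intro h
    have hPne : P M ≠ 0 := fun hz => by rw [hz, natDegree_zero] at h; omega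
    have : (P M).coeff d ≠ 0 := by
      rw [← h]
      exact Polynomial.leadingCoeff_ne_zero.2 hPne
    rw [hc] at this
    exact le_antisymm hQle (le_natDegree_of_ne_zero this)
  · intro h
    have hQne : Q M ≠ 0 := fun hz => by rw [hz, natDegree_zero] at h; omega
    have : (Q M).coeff d ≠ 0 := by
      rw [← h]
      exact Polynomial.leadingCoeff_ne_zero.2 hQne
    rw [← hc] at this
    exact le_antisymm hPle (le_natDegree_of_ne_zero this)


end KL
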